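/- Resolvent estimate for homogeneous matrix symbols: Let m > 0 and N ≥ 1. Let a : ℝⁿ → M(N,ℂ) be continuous with a(cξ) = c^m a(ξ) for all c > 0 and ξ ∈ ℝⁿ (in particular a(0) = 0). Let L ⊆ ℂ be a closed set with cλ ∈ L for all c > 0 and λ ∈ L (for instance a finite union of closed rays emanating from the origin). Assume that a(ξ) − λ·I is invertible for every ξ ∈ ℝⁿ with |ξ| = 1 and every λ ∈ L. Then there is a constant C > 0 such that for all ξ ∈ ℝⁿ and λ ∈ L with (ξ,λ) ≠ (0,0), the matrix a(ξ) − λ·I is invertible and ‖(a(ξ) − λ·I)^{−1}‖ ≤ C (|ξ| + |λ|^{1/m})^{−m}. -/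

import Mathlib

open scoped Matrix.Norms.L2Operator

/-- **Resolvent estimate for homogeneous matrix symbols**: let `a : ℝⁿ → M(N,ℂ)` be
continuous and positively homogeneous of degree `m > 0`, and let `L ⊆ ℂ` be a closed cone
such that `a(ξ) − λI` is invertible for all `|ξ| = 1` and `λ ∈ L`. Then there is `C > 0`
such that for all `(ξ,λ) ≠ (0,0)` with `λ ∈ L`, the matrix `a(ξ) − λI` is invertible and
`‖(a(ξ) − λI)⁻¹‖ ≤ C (|ξ| + |λ|^{1/m})^{−m}` (operator norm on `ℂᴺ`). -/
theorem homogeneous_symbol_resolvent_estimate (n N : ℕ) (hN : 1 ≤ N) (m : ℝ) (hm : 0 < m)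
    (a : EuclideanSpace ℝ (Fin n) → Matrix (Fin N) (Fin N) ℂ) (ha : Continuous a)
    (hhom : ∀ c : ℝ, 0 < c → ∀ ξ, a (c • ξ) = (c ^ m : ℝ) • a ξ)
    (L : Set ℂ) (hLclosed : IsClosed L)
    (hLcone : ∀ c : ℝ, 0 < c → ∀ lam ∈ L, (c : ℂ) * lam ∈ L)
    (hinv : ∀ ξ : EuclideanSpace ℝ (Fin n), ‖ξ‖ = 1 → ∀ lam ∈ L,
      IsUnit (a ξ - lam • (1 : Matrix (Fin N) (Fin N) ℂ))) :
    ∃ C > 0, ∀ (ξ : EuclideanSpace ℝ (Fin n)) (lam : ℂ), lam ∈ L → ¬(ξ = 0 ∧ lam = 0) →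
      IsUnit (a ξ - lam • (1 : Matrix (Fin N) (Fin N) ℂ)) ∧
      ‖(a ξ - lam • (1 : Matrix (Fin N) (Fin N) ℂ))⁻¹‖ ≤
        C * (‖ξ‖ + ‖lam‖ ^ (1 / m)) ^ (-m) := by
  set M : EuclideanSpace ℝ (Fin n) × ℂ → Matrix (Fin N) (Fin N) ℂ :=
    fun p => a p.1 - p.2 • 1 with hM
  -- a 0 = 0
  have ha0 : a 0 = 0 := by
    have h2 := hhom 2 (by norm_num) 0
    rw [smul_zero] at h2
    have h2m : (1:ℝ) < (2:ℝ) ^ m :=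
      (Real.one_lt_rpow_iff_of_pos (by norm_num)).2 (Or.inl ⟨by norm_num, hm⟩)
    have : ((2:ℝ) ^ m - 1) • a 0 = 0 := by
      rw [sub_smul, one_smul, ← h2, sub_eq_zero]
    rcases smul_eq_zero.1 this with h | h
    · exact absurd h (by nlinarith)
    · exact h
  -- scaling identity
  have hscale : ∀ t : ℝ, 0 < t → ∀ (ξ : EuclideanSpace ℝ (Fin n)) (lam : ℂ),
      M (ξ, lam) = ((t ^ m : ℝ) : ℂ) • M (t⁻¹ • ξ, ((((t ^ m)⁻¹ : ℝ) : ℂ)) * lam) := by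
    intro t ht ξ lam
    have htm : (0:ℝ) < t ^ m := Real.rpow_pos_of_pos ht m
    have h1 : a (t⁻¹ • ξ) = ((t⁻¹) ^ m : ℝ) • a ξ := hhom t⁻¹ (inv_pos.2 ht) ξ
    have h2 : ((t:ℝ)⁻¹) ^ m = (t ^ m)⁻¹ := Real.inv_rpow ht.le m
    have hc : ((t ^ m : ℝ) : ℂ) * (((t ^ m)⁻¹ : ℝ) : ℂ) = 1 := by
      push_cast
      exact mul_inv_cancel₀ (by exact_mod_cast htm.ne')
    simp only [hM]
    rw [h1, h2, smul_sub, ← Complex.coe_smul ((t ^ m)⁻¹), smul_smul, smul_smul,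
      ← mul_assoc, hc, one_smul, one_mul]
  -- invertibility everywhere off the origin
  have hunit : ∀ (ξ : EuclideanSpace ℝ (Fin n)) (lam : ℂ), lam ∈ L → ¬(ξ = 0 ∧ lam = 0) →
      IsUnit (M (ξ, lam)) := by
    intro ξ lam hl hne
    by_cases hξ : ξ = 0
    · have hlam : lam ≠ 0 := fun h => hne ⟨hξ, h⟩
      rw [hM]
      simp only [hξ, ha0, zero_sub]
      rw [Matrix.isUnit_iff_isUnit_det]
      simp [Matrix.det_neg, Matrix.det_smul, isUnit_iff_ne_zero, hlam, pow_ne_zero]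
    · have ht : (0:ℝ) < ‖ξ‖ := norm_pos_iff.2 hξ
      have htm : (0:ℝ) < ‖ξ‖ ^ m := Real.rpow_pos_of_pos ht m
      have hl' : ((((‖ξ‖ ^ m)⁻¹ : ℝ) : ℂ)) * lam ∈ L := hLcone _ (inv_pos.2 htm) lam hl
      have hξ' : ‖(‖ξ‖⁻¹ • ξ : EuclideanSpace ℝ (Fin n))‖ = 1 := by
        rw [norm_smul, norm_inv, norm_norm, inv_mul_cancel₀ ht.ne']
      have hu := hinv _ hξ' _ hl'
      rw [hscale ‖ξ‖ ht ξ lam, Matrix.isUnit_iff_isUnit_det, Matrix.det_smul,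
        isUnit_iff_ne_zero]
      exact mul_ne_zero (pow_ne_zero _ (by exact_mod_cast htm.ne'))
        (isUnit_iff_ne_zero.1 ((Matrix.isUnit_iff_isUnit_det _).1 hu))
  -- compact slice
  set S : Set (EuclideanSpace ℝ (Fin n) × ℂ) :=
    {p | p.2 ∈ L ∧ ‖p.1‖ + ‖p.2‖ ^ (1 / m) = 1} with hS
  have hcont_g : Continuous fun p : EuclideanSpace ℝ (Fin n) × ℂ =>
      ‖p.1‖ + ‖p.2‖ ^ (1 / m) :=
    (continuous_fst.norm).add
      ((Real.continuous_rpow_const (by positivity)).comp continuous_snd.norm)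
  have hScompact : IsCompact S := by
    refine Metric.isCompact_of_isClosed_isBounded
      ((hLclosed.preimage continuous_snd).inter (isClosed_eq hcont_g continuous_const)) ?_
    refine (Metric.isBounded_closedBall (x := (0 : EuclideanSpace ℝ (Fin n) × ℂ))
      (r := 1)).subset ?_
    rintro ⟨ξ, lam⟩ ⟨-, heq⟩
    have h1 : (0:ℝ) ≤ ‖lam‖ ^ (1/m) := Real.rpow_nonneg (norm_nonneg _) _
    have h2 : ‖ξ‖ ≤ 1 := by linarith [heq, h1]
    have h3 : ‖lam‖ ≤ 1 := by
      by_contra h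
      push_neg at h
      have := (Real.one_lt_rpow_iff_of_pos (by linarith) (y := 1/m)).2 (Or.inl ⟨h, by positivity⟩)
      linarith [norm_nonneg ξ]
    simp only [Metric.mem_closedBall, dist_zero_right, Prod.norm_def]
    exact max_le h2 h3
  have hMcont : Continuous M := (ha.comp continuous_fst).sub (continuous_snd.smul continuous_const)
  have hfcont : ContinuousOn (fun p => (M p)⁻¹) S := by
    intro p hp
    have hu : IsUnit (M p) := by
      refine hunit p.1 p.2 hp.1 ?_
      rintro ⟨h1, h2⟩
      have := hp.2
      rw [h1, h2] at this
      simp only [norm_zero] at this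
      rw [Real.zero_rpow (by positivity : (0:ℝ) < 1/m).ne'] at this
      norm_num at this
    have hdet : (M p).det ≠ 0 := by
      rw [← isUnit_iff_ne_zero, ← Matrix.isUnit_iff_isUnit_det]
      exact hu
    have : ContinuousAt (fun q => (M q)⁻¹) p := by
      simp only [Matrix.inv_def, Ring.inverse_eq_inv']
      exact ((hMcont.matrix_det.continuousAt).inv₀ hdet).smul
        (hMcont.matrix_adjugate.continuousAt)
    exact this.continuousWithinAt
  obtain ⟨C0, hC0⟩ := hScompact.exists_bound_of_continuousOn hfcont
  set C := max C0 1 with hC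
  refine ⟨C, lt_of_lt_of_le one_pos (le_max_right _ _), ?_⟩
  intro ξ lam hl hne
  set t : ℝ := ‖ξ‖ + ‖lam‖ ^ (1 / m) with htdef
  have ht : 0 < t := by
    rcases eq_or_ne ξ 0 with h | h
    · have hlam : lam ≠ 0 := fun h' => hne ⟨h, h'⟩
      have : (0:ℝ) < ‖lam‖ ^ (1/m) := Real.rpow_pos_of_pos (norm_pos_iff.2 hlam) _
      have := norm_nonneg ξ
      positivity
    · have : (0:ℝ) < ‖ξ‖ := norm_pos_iff.2 h
      have h1 : (0:ℝ) ≤ ‖lam‖ ^ (1/m) := Real.rpow_nonneg (norm_nonneg _) _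
      positivity
  have htm : (0:ℝ) < t ^ m := Real.rpow_pos_of_pos ht m
  set lam' : ℂ := ((((t ^ m)⁻¹ : ℝ) : ℂ)) * lam with hlam'
  set ξ' : EuclideanSpace ℝ (Fin n) := t⁻¹ • ξ with hξ'
  have hl' : lam' ∈ L := hLcone _ (inv_pos.2 htm) lam hl
  have hmem : (ξ', lam') ∈ S := by
    refine ⟨hl', ?_⟩
    have h1 : ‖ξ'‖ = t⁻¹ * ‖ξ‖ := by
      rw [hξ', norm_smul, norm_inv, Real.norm_of_nonneg ht.le]
    have h2 : ‖lam'‖ ^ (1/m) = t⁻¹ * ‖lam‖ ^ (1/m) := by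
      rw [hlam', norm_mul]
      have : ‖((((t ^ m)⁻¹ : ℝ) : ℂ))‖ = (t ^ m)⁻¹ := by
        rw [Complex.norm_real, Real.norm_of_nonneg (inv_nonneg.2 htm.le)]
      rw [this, Real.mul_rpow (inv_nonneg.2 htm.le) (norm_nonneg _),
        Real.inv_rpow htm.le, ← Real.rpow_mul ht.le, mul_one_div, div_self hm.ne',
        Real.rpow_one]
    rw [h1, h2, ← mul_add, ← htdef, inv_mul_cancel₀ ht.ne']
  have hu' : IsUnit (M (ξ', lam')) := by
    refine hunit ξ' lam' hl' ?_
    rintro ⟨h1, h2⟩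
    have := hmem.2
    rw [h1, h2] at this
    simp only [norm_zero] at this
    rw [Real.zero_rpow (by positivity : (0:ℝ) < 1/m).ne'] at this
    norm_num at this
  have hid : M (ξ, lam) = ((t ^ m : ℝ) : ℂ) • M (ξ', lam') := hscale t ht ξ lam
  have hudet' : IsUnit (M (ξ', lam')).det := (Matrix.isUnit_iff_isUnit_det _).1 hu'
  have hu : IsUnit (M (ξ, lam)) := by
    rw [hid, Matrix.isUnit_iff_isUnit_det, Matrix.det_smul, isUnit_iff_ne_zero]
    refine mul_ne_zero (pow_ne_zero _ ?_) (isUnit_iff_ne_zero.1 hudet')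
    exact_mod_cast htm.ne'
  refine ⟨hu, ?_⟩
  have hinv_eq : (M (ξ, lam))⁻¹ = (((t ^ m : ℝ) : ℂ))⁻¹ • (M (ξ', lam'))⁻¹ := by
    apply Matrix.inv_eq_right_inv
    rw [hid, Matrix.smul_mul, Matrix.mul_smul, smul_smul,
      mul_inv_cancel₀ (by exact_mod_cast htm.ne' : ((t ^ m : ℝ) : ℂ) ≠ 0), one_smul,
      Matrix.mul_nonsing_inv _ hudet']
  rw [hinv_eq, norm_smul]
  have hnorm : ‖(((t ^ m : ℝ) : ℂ))⁻¹‖ = (t ^ m)⁻¹ := by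
    rw [norm_inv, Complex.norm_real, Real.norm_of_nonneg htm.le]
  rw [hnorm, Real.rpow_neg ht.le]
  calc (t ^ m)⁻¹ * ‖(M (ξ', lam'))⁻¹‖ ≤ (t ^ m)⁻¹ * C0 :=
        mul_le_mul_of_nonneg_left (hC0 _ hmem) (inv_nonneg.2 htm.le)
    _ ≤ (t ^ m)⁻¹ * C := mul_le_mul_of_nonneg_left (le_max_left _ _) (inv_nonneg.2 htm.le)
    _ = C * (t ^ m)⁻¹ := mul_comm _ _
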